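/- arXiv:0811.4209 — 4 statements merged into one kernel-verified Lean document; each statement's English description precedes it below -/
import Mathlib

section
/- Let A, B, C be real numbers with 0 ≤ A, B, C < 1, A ≥ BC, B ≥ CA, and C ≥ AB. Then either for all w on the unit circle |1 + A·w| > |B·w + C|, or for all w on the unit circle |1 + B·w| > |A·w + C| (at least one of the two uniform strict inequalities holds). -/
lemma key_unif (A B C : ℝ) (hBC : B * C ≤ A) (h : |B - C| < 1 - A) :
    ∀ w : ℂ, ‖w‖ = 1 →
      ‖(B : ℂ) * w + (C : ℂ)‖ < ‖1 + (A : ℂ) * w‖ := by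
  intro w hw
  have hsq : w.re ^ 2 + w.im ^ 2 = 1 := by
    have := Complex.sq_norm w
    rw [hw] at this
    simp [Complex.normSq_apply] at this
    nlinarith [this]
  have hre : -1 ≤ w.re := by nlinarith [sq_nonneg w.im]
  have habs := abs_lt.mp h
  refine lt_of_pow_lt_pow_left₀ 2 (norm_nonneg _) ?_
  rw [Complex.sq_norm, Complex.sq_norm]
  simp [Complex.normSq_apply, Complex.add_re, Complex.add_im, Complex.mul_re,
    Complex.mul_im, Complex.ofReal_re, Complex.ofReal_im]
  have h1 : A * w.im * (A * w.im) = A * A * (1 - w.re * w.re) := by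
    linear_combination (A * A) * hsq
  have h2 : B * w.im * (B * w.im) = B * B * (1 - w.re * w.re) := by
    linear_combination (B * B) * hsq
  nlinarith [h1, h2, hBC, mul_nonneg (sub_nonneg.mpr hBC) (sub_nonneg.mpr hre),
    mul_pos (by linarith [habs.1] : (0:ℝ) < 1 - A + (B - C))
      (by linarith [habs.2] : (0:ℝ) < 1 - A - (B - C))]

theorem stmt_1 (A B C : ℝ)
    (hA0 : 0 ≤ A) (hA1 : A < 1) (hB0 : 0 ≤ B) (hB1 : B < 1)
    (hC0 : 0 ≤ C) (hC1 : C < 1)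
    (hABC : A ≥ B * C) (hBCA : B ≥ C * A) (hCAB : C ≥ A * B) :
    (∀ w : ℂ, ‖w‖ = 1 →
        ‖(B : ℂ) * w + (C : ℂ)‖ < ‖1 + (A : ℂ) * w‖) ∨
    (∀ w : ℂ, ‖w‖ = 1 →
        ‖(A : ℂ) * w + (C : ℂ)‖ < ‖1 + (B : ℂ) * w‖) := by
  rcases le_or_gt B A with hBA | hAB
  · rcases le_or_gt C B with hCB | hBC
    · -- |B - C| < 1 - A
      left
      exact key_unif A B C hABC (abs_lt.mpr ⟨by nlinarith, by nlinarith⟩)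
    · -- |A - C| < 1 - B
      right
      exact key_unif B A C (by nlinarith) (abs_lt.mpr ⟨by nlinarith, by nlinarith⟩)
  · rcases le_or_gt C A with hCA | hAC
    · right
      exact key_unif B A C (by nlinarith) (abs_lt.mpr ⟨by nlinarith, by nlinarith⟩)
    · left
      exact key_unif A B C hABC (abs_lt.mpr ⟨by nlinarith, by nlinarith⟩)
end

section
/- Let N > N' > 0 be integers, λ a complex number with |λ| = 1, ν', ν integers, and A, B, C real numbers with 0 ≤ A, B, C < 1, A ≥ BC, B ≥ CA, C ≥ AB. Then all N roots (counted with multiplicity) of the polynomial P(z) = z^N + Aλ^{ν'}z^{N−N'} + Bλ^{ν−ν'}z^{N'} + Cλ^ν lie strictly inside the open unit disk. -/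
set_option maxHeartbeats 1000000


theorem stmt_2 (N N' : ℕ) (hN' : 0 < N') (hNN : N' < N)
    (lam : ℂ) (hlam : ‖lam‖ = 1) (ν' ν : ℤ)
    (A B C : ℝ)
    (hA0 : 0 ≤ A) (hA1 : A < 1) (hB0 : 0 ≤ B) (hB1 : B < 1)
    (hC0 : 0 ≤ C) (hC1 : C < 1)
    (hABC : A ≥ B * C) (hBCA : B ≥ C * A) (hCAB : C ≥ A * B) :
    ∀ z : ℂ,
      z ^ N + (A : ℂ) * lam ^ ν' * z ^ (N - N') + (B : ℂ) * lam ^ (ν - ν') * z ^ N'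
        + (C : ℂ) * lam ^ ν = 0 →
      ‖z‖ < 1 := by
  intro z hz
  by_contra hcon
  push_neg at hcon
  have hlam0 : lam ≠ 0 := by
    intro h; rw [h] at hlam; simp at hlam
  set c : ℂ := lam ^ (ν' : ℤ) with hc
  set w : ℂ := z ^ N' with hw
  have hcabs : ‖c‖ = 1 := by
    rw [hc, norm_zpow, hlam, one_zpow]
  have hzN : z ^ (N - N') * z ^ N' = z ^ N := by
    rw [← pow_add]; congr 1; omega
  have hlamν : lam ^ (ν - ν') * lam ^ (ν' : ℤ) = lam ^ ν := by
    rw [← zpow_add₀ hlam0]; congr 1; ring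
  have key : z ^ (N - N') * (w + (A:ℂ) * c) = -(lam ^ (ν - ν') * ((B:ℂ) * w + (C:ℂ) * c)) := by
    rw [hw, hc]; linear_combination hz + hzN + (C:ℂ) * hlamν
  have habs := congrArg (norm : ℂ → ℝ) key
  rw [norm_mul, norm_neg, norm_mul, norm_zpow, hlam, one_zpow, one_mul] at habs
  have hzpow : (1:ℝ) ≤ ‖z ^ (N - N')‖ := by
    rw [norm_pow]; exact one_le_pow₀ hcon
  have hle : ‖w + (A:ℂ)*c‖ ≤ ‖(B:ℂ)*w + (C:ℂ)*c‖ := by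
    calc ‖w + (A:ℂ)*c‖
        ≤ ‖z ^ (N - N')‖ * ‖w + (A:ℂ)*c‖ :=
          le_mul_of_one_le_left (norm_nonneg _) hzpow
      _ = ‖(B:ℂ)*w + (C:ℂ)*c‖ := habs
  have hsq : Complex.normSq (w + (A:ℂ)*c) ≤ Complex.normSq ((B:ℂ)*w + (C:ℂ)*c) := by
    rw [← Complex.sq_norm, ← Complex.sq_norm]
    exact pow_le_pow_left₀ (norm_nonneg _) hle 2
  simp only [Complex.normSq_apply, Complex.add_re, Complex.add_im, Complex.mul_re,
    Complex.mul_im, Complex.ofReal_re, Complex.ofReal_im, zero_mul, mul_zero,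
    sub_zero, zero_add, add_zero, zero_sub] at hsq
  set s : ℝ := ‖w‖ with hs
  have hw2 : w.re^2 + w.im^2 = s^2 := by
    rw [hs, Complex.sq_norm, Complex.normSq_apply]; ring
  have hc1 : c.re^2 + c.im^2 = 1 := by
    have h := Complex.sq_norm c
    rw [hcabs, Complex.normSq_apply] at h
    nlinarith [h]
  set x : ℝ := w.re * c.re + w.im * c.im with hx
  have h1 : s^2 + 2*A*x + A^2 ≤ B^2*s^2 + 2*B*C*x + C^2 := by
    nlinarith [hsq, hw2, hc1]
  clear hsq hz key habs
  have hs1 : (1:ℝ) ≤ s := by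
    rw [hs, hw, norm_pow]; exact one_le_pow₀ hcon
  have hx2 : x^2 ≤ s^2 := by
    have key2 : x^2 + (w.re * c.im - w.im * c.re)^2
        = (w.re^2 + w.im^2) * (c.re^2 + c.im^2) := by rw [hx]; ring
    rw [hw2, hc1, mul_one] at key2
    nlinarith [sq_nonneg (w.re * c.im - w.im * c.re), key2]
  have hxs : -s ≤ x := by nlinarith [hx2, hs1]
  have hp1 : 0 < 1 - A - B + C := by nlinarith
  have hp2 : 0 < 1 - A + B - C := by nlinarith
  rcases le_or_gt C B with hcb | hcb
  · nlinarith [mul_nonneg (by nlinarith : (0:ℝ) ≤ A - B*C) (by linarith : (0:ℝ) ≤ x + s),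
      mul_pos hp1 hp2,
      mul_nonneg (by linarith : (0:ℝ) ≤ s - 1) hp1.le,
      mul_nonneg (mul_nonneg (by linarith : (0:ℝ) ≤ 1 - B) (by linarith : (0:ℝ) ≤ B - C)) (by linarith : (0:ℝ) ≤ s - 1),
      mul_nonneg (mul_nonneg (by linarith : (0:ℝ) ≤ s - 1) (by linarith : (0:ℝ) ≤ s - 1)) (by nlinarith : (0:ℝ) ≤ 1 - B^2)]
  · nlinarith [mul_nonneg (by nlinarith : (0:ℝ) ≤ A - B*C) (by linarith : (0:ℝ) ≤ x + s),
      mul_pos hp1 hp2,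
      mul_nonneg (by linarith : (0:ℝ) ≤ s - 1) (by linarith : (0:ℝ) ≤ 1 - A),
      mul_nonneg (mul_nonneg (by linarith : (0:ℝ) ≤ s - 1) hB0) (by linarith : (0:ℝ) ≤ C - B),
      mul_nonneg (mul_nonneg (by linarith : (0:ℝ) ≤ s - 1) (by linarith : (0:ℝ) ≤ s - 1)) (by nlinarith : (0:ℝ) ≤ 1 - B^2)]
end

section
/- Let 0 < q₁ < p₁ < q₂ < p₂ < ⋯ < q_M < p_M be real numbers and d₁,…,d_M real numbers with d_i > 1 for all i. Let R be the M×M matrix with entries R_{ij} = r_i δ_{ij} + 1/(p_i − q_j), where r_i is any complex number with |r_i|² = (d_i²/(p_i − q_i)²) ∏_{j≠i} ((q_j − q_i)(p_j − p_i))/((p_j − q_i)(q_j − p_i)). Then R is invertible. -/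
open Finset Polynomial

lemma lag_basis_leadingCoeff {ι : Type*} [DecidableEq ι] (s : Finset ι) (v : ι → ℂ) (i : ι) :
    (Lagrange.basis s v i).leadingCoeff = ∏ j ∈ s.erase i, (v i - v j)⁻¹ := by
  unfold Lagrange.basis
  rw [Polynomial.leadingCoeff_prod]
  refine Finset.prod_congr rfl fun j _ => ?_
  rw [Lagrange.basisDivisor, leadingCoeff_mul, leadingCoeff_C, (monic_X_sub_C (v j)).leadingCoeff,
    mul_one]

lemma lag_sum {ι : Type*} [DecidableEq ι] (s : Finset ι) (v : ι → ℂ) (hv : Set.InjOn v s)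
    (f : Polynomial ℂ) (hdeg : f.degree < (s.card - 1 : ℕ)) :
    ∑ i ∈ s, f.eval (v i) * ∏ j ∈ s.erase i, (v i - v j)⁻¹ = 0 := by
  have hlt : f.degree < s.card := hdeg.trans_le (by exact_mod_cast Nat.sub_le _ _)
  have hf := Lagrange.eq_interpolate hv hlt
  have h0 : f.coeff (s.card - 1) = 0 := Polynomial.coeff_eq_zero_of_degree_lt hdeg
  nth_rewrite 1 [hf] at h0
  rw [Lagrange.interpolate_apply, Polynomial.finset_sum_coeff] at h0
  rw [← h0]
  refine Finset.sum_congr rfl fun i hi => ?_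
  rw [Polynomial.coeff_C_mul, ← lag_basis_leadingCoeff s v i,
    ← Lagrange.natDegree_basis hv hi, Polynomial.coeff_natDegree]

lemma erase_none_insertNone {ι : Type*} [DecidableEq ι] (s : Finset ι) :
    (Finset.insertNone s).erase none = s.map Function.Embedding.some := by
  ext o
  cases o <;> simp

lemma erase_some_insertNone {ι : Type*} [DecidableEq ι] (s : Finset ι) (i : ι) :
    (Finset.insertNone s).erase (some i) = Finset.insertNone (s.erase i) := by
  ext o
  cases o <;> simp [and_comm]

lemma lag_sum2 {ι : Type*} [DecidableEq ι] (s : Finset ι) (v : ι → ℂ) (c : ℂ)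
    (hv : Set.InjOn v s) (hc : ∀ i ∈ s, v i ≠ c) (f : Polynomial ℂ)
    (hdeg : f.degree < (s.card : ℕ)) :
    f.eval c * ∏ j ∈ s, (c - v j)⁻¹ +
      ∑ i ∈ s, f.eval (v i) * ((v i - c)⁻¹ * ∏ j ∈ s.erase i, (v i - v j)⁻¹) = 0 := by
  have hv' : Set.InjOn (fun o : Option ι => o.elim c v) (Finset.insertNone s) := by
    intro o1 h1 o2 h2 h
    cases o1 <;> cases o2 <;>
      simp only [Option.elim_none, Option.elim_some] at h
    · rfl
    · exact absurd h.symm (hc _ (by simpa using h2))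
    · exact absurd h (hc _ (by simpa using h1))
    · exact congrArg some (hv (by simpa using h1) (by simpa using h2) h)
  have key := lag_sum (Finset.insertNone s) (fun o : Option ι => o.elim c v) hv' f
    (by rwa [Finset.card_insertNone, Nat.add_sub_cancel])
  rw [Finset.sum_insertNone] at key
  rw [erase_none_insertNone, Finset.prod_map] at key
  simp only [Option.elim_none, Option.elim_some, Function.Embedding.some_apply] at key
  have hterm : ∀ i ∈ s, f.eval (v i) * ∏ j ∈ (Finset.insertNone s).erase (some i),
      ((v i : ℂ) - (Option.elim j c v)) ⁻¹ =
      f.eval (v i) * ((v i - c)⁻¹ * ∏ j ∈ s.erase i, (v i - v j)⁻¹) := by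
    intro i hi
    rw [erase_some_insertNone, Finset.prod_insertNone]
    simp only [Option.elim_none, Option.elim_some]
  rw [Finset.sum_congr rfl hterm] at key
  exact key

lemma key_id {M : ℕ} (P Q : Fin M → ℂ) (hPQ : ∀ i j, P i ≠ Q j)
    (hPinj : Function.Injective P) (m n : Fin M) :
    ∑ i, ((∏ j, (P i - Q j)) * ∏ j ∈ Finset.univ.erase i, (P i - P j)⁻¹) *
        ((P i - Q m)⁻¹ * (P i - Q n)⁻¹)
      + (if m = n then (∏ j ∈ Finset.univ.erase m, (Q m - Q j)) * ∏ j, (Q m - P j)⁻¹ else 0)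
      = 0 := by
  have hM : 0 < M := n.pos
  have hdeg : (Lagrange.nodal (Finset.univ.erase n) Q).degree < ((Finset.univ : Finset (Fin M)).card : ℕ) := by
    rw [Lagrange.degree_nodal, Finset.card_erase_of_mem (Finset.mem_univ n), Finset.card_univ,
      Fintype.card_fin]
    exact_mod_cast Nat.sub_lt hM one_pos
  have key := lag_sum2 Finset.univ P (Q m) hPinj.injOn (fun i _ => hPQ i m)
    (Lagrange.nodal (Finset.univ.erase n) Q) hdeg
  simp only [Lagrange.eval_nodal] at key
  rw [add_comm] at key
  have e1 : ∑ i, ((∏ j, (P i - Q j)) * ∏ j ∈ Finset.univ.erase i, (P i - P j)⁻¹) *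
        ((P i - Q m)⁻¹ * (P i - Q n)⁻¹)
      = ∑ i, (∏ j ∈ Finset.univ.erase n, (P i - Q j)) *
          ((P i - Q m)⁻¹ * ∏ j ∈ Finset.univ.erase i, (P i - P j)⁻¹) := by
    refine Finset.sum_congr rfl fun i _ => ?_
    rw [← Finset.mul_prod_erase Finset.univ (fun j => P i - Q j) (Finset.mem_univ n)]
    have h1 : P i - Q n ≠ 0 := sub_ne_zero.mpr (hPQ i n)
    have h2 : P i - Q m ≠ 0 := sub_ne_zero.mpr (hPQ i m)
    have h3 : ∏ j ∈ Finset.univ.erase i, (P i - P j) ≠ 0 :=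
      Finset.prod_ne_zero_iff.mpr fun j hj =>
        sub_ne_zero.mpr fun h => (Finset.mem_erase.mp hj).1 (hPinj h).symm
    field_simp
  have e2 : (if m = n then (∏ j ∈ Finset.univ.erase m, (Q m - Q j)) * ∏ j, (Q m - P j)⁻¹ else 0)
      = (∏ j ∈ Finset.univ.erase n, (Q m - Q j)) * ∏ j, (Q m - P j)⁻¹ := by
    rcases eq_or_ne m n with h | h
    · subst h; simp
    · rw [if_neg h, Finset.prod_eq_zero (Finset.mem_erase.mpr ⟨h, Finset.mem_univ m⟩)
        (sub_self (Q m)), zero_mul]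
  rw [e1, e2]
  exact key

theorem stmt_5 (M : ℕ) (p q : Fin M → ℝ)
    (hq0 : ∀ i, 0 < q i)
    (hqp : ∀ i, q i < p i) (hpq : ∀ i j : Fin M, i < j → p i < q j)
    (d : Fin M → ℝ) (hd : ∀ i, 1 < d i)
    (r : Fin M → ℂ)
    (hr : ∀ i, ‖r i‖ ^ 2 =
      (d i ^ 2 / (p i - q i) ^ 2) *
        ∏ j ∈ Finset.univ.erase i, ((q j - q i) * (p j - p i)) / ((p j - q i) * (q j - p i))) :
    IsUnit (Matrix.of fun i j : Fin M =>
      r i * (if i = j then 1 else 0) + 1 / ((p i : ℂ) - (q j : ℂ))) := by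
  rw [Matrix.isUnit_iff_isUnit_det, isUnit_iff_ne_zero]
  intro hdet
  obtain ⟨γ, hγ0, hmul⟩ := Matrix.exists_mulVec_eq_zero_iff.mpr hdet
  -- order facts
  have hq_lt : ∀ i j : Fin M, i < j → q i < q j := fun i j h => (hqp i).trans (hpq i j h)
  have hp_lt : ∀ i j : Fin M, i < j → p i < p j := fun i j h => (hpq i j h).trans (hqp j)
  have hqplt : ∀ i j : Fin M, j ≤ i → q j < p i := by
    intro i j h
    rcases eq_or_lt_of_le h with h | h
    · exact lt_of_lt_of_le (hqp j) (le_of_eq (congrArg p h))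
    · exact (hq_lt j i h).trans (hqp i)
  have hqltp : ∀ i j : Fin M, i < j → q i < p j := fun i j h =>
    (hqp i).trans ((hpq i j h).trans (hqp j))
  have hpq0 : ∀ i j : Fin M, p i - q j ≠ 0 := by
    intro i j
    rcases le_or_gt j i with h | h
    · exact sub_ne_zero.mpr (hqplt i j h).ne'
    · exact sub_ne_zero.mpr (hpq i j h).ne
  have hqp0 : ∀ i j : Fin M, q i - p j ≠ 0 := by
    intro i j
    rcases le_or_gt i j with h | h
    · exact sub_ne_zero.mpr (hqplt j i h).ne
    · exact sub_ne_zero.mpr (hpq j i h).ne'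
  have hpp0 : ∀ i j : Fin M, j ≠ i → p i - p j ≠ 0 := by
    intro i j h
    rcases h.lt_or_gt with h | h
    · exact sub_ne_zero.mpr (hp_lt j i h).ne'
    · exact sub_ne_zero.mpr (hp_lt i j h).ne
  have hqq0 : ∀ i j : Fin M, j ≠ i → q i - q j ≠ 0 := by
    intro i j h
    rcases h.lt_or_gt with h | h
    · exact sub_ne_zero.mpr (hq_lt j i h).ne'
    · exact sub_ne_zero.mpr (hq_lt i j h).ne
  set P : Fin M → ℂ := fun i => (p i : ℂ) with hPdef
  set Q : Fin M → ℂ := fun i => (q i : ℂ) with hQdef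
  have hPQ : ∀ i j, P i ≠ Q j := by
    intro i j h
    simp only [hPdef, hQdef] at h
    exact hpq0 i j (sub_eq_zero.mpr (by exact_mod_cast h))
  have hPinj : Function.Injective P := by
    intro i j h
    by_contra hne
    simp only [hPdef] at h
    exact hpp0 i j (Ne.symm hne) (sub_eq_zero.mpr (by exact_mod_cast h))
  -- the kernel equation
  have heq : ∀ i, r i * γ i + ∑ j, (P i - Q j)⁻¹ * γ j = 0 := by
    intro i
    have h0 := congrFun hmul i
    simp only [Matrix.mulVec, dotProduct, Matrix.of_apply, Pi.zero_apply] at h0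
    have hsplit : ∀ j, (r i * (if i = j then 1 else 0) + 1 / (P i - Q j)) * γ j
        = (if i = j then r i * γ j else 0) + (P i - Q j)⁻¹ * γ j := by
      intro j
      split <;> simp [one_div] <;> ring
    rw [Finset.sum_congr rfl fun j _ => hsplit j, Finset.sum_add_distrib,
      Finset.sum_ite_eq] at h0
    simpa using h0
  set f : Fin M → ℂ := fun i => ∑ j, (P i - Q j)⁻¹ * γ j with hfdef
  have hfr : ∀ i, f i = -(r i * γ i) := by
    intro i
    have h := heq i
    rw [hfdef]
    linear_combination h
  have hconj : ∀ i, (starRingEnd ℂ) (f i) = ∑ j, (P i - Q j)⁻¹ * (starRingEnd ℂ) (γ j) := by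
    intro i
    rw [hfdef]
    simp only [map_sum, map_mul, map_inv₀, map_sub, hPdef, hQdef, Complex.conj_ofReal]
  -- main complex identity
  have hmain : ∑ i, ((∏ j, (P i - Q j)) * ∏ j ∈ Finset.univ.erase i, (P i - P j)⁻¹) *
        (f i * (starRingEnd ℂ) (f i))
      = ∑ m, γ m * (starRingEnd ℂ) (γ m) *
        (-((∏ j ∈ Finset.univ.erase m, (Q m - Q j)) * ∏ j, (Q m - P j)⁻¹)) := by
    have step1 : ∀ i, ((∏ j, (P i - Q j)) * ∏ j ∈ Finset.univ.erase i, (P i - P j)⁻¹) *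
          (f i * (starRingEnd ℂ) (f i))
        = ∑ m, ∑ n, (γ m * (starRingEnd ℂ) (γ n)) *
            (((∏ j, (P i - Q j)) * ∏ j ∈ Finset.univ.erase i, (P i - P j)⁻¹) *
              ((P i - Q m)⁻¹ * (P i - Q n)⁻¹)) := by
      intro i
      rw [hconj i, hfdef]
      simp only []
      rw [Finset.sum_mul_sum]
      rw [Finset.mul_sum]
      refine Finset.sum_congr rfl fun m _ => ?_
      rw [Finset.mul_sum]
      refine Finset.sum_congr rfl fun n _ => ?_
      ring
    rw [Finset.sum_congr rfl fun i _ => step1 i]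
    rw [Finset.sum_comm]
    refine Finset.sum_congr rfl fun m _ => ?_
    rw [Finset.sum_comm]
    have step2 : ∀ n, ∑ i, (γ m * (starRingEnd ℂ) (γ n)) *
          (((∏ j, (P i - Q j)) * ∏ j ∈ Finset.univ.erase i, (P i - P j)⁻¹) *
            ((P i - Q m)⁻¹ * (P i - Q n)⁻¹))
        = γ m * (starRingEnd ℂ) (γ n) *
          (-(if m = n then (∏ j ∈ Finset.univ.erase m, (Q m - Q j)) * ∏ j, (Q m - P j)⁻¹
            else 0)) := by
      intro n
      rw [← Finset.mul_sum]
      congr 1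
      have hk := key_id P Q hPQ hPinj m n
      linear_combination hk
    rw [Finset.sum_congr rfl fun n _ => step2 n]
    have step3 : ∀ n ∈ Finset.univ, γ m * (starRingEnd ℂ) (γ n) *
          (-(if m = n then (∏ j ∈ Finset.univ.erase m, (Q m - Q j)) * ∏ j, (Q m - P j)⁻¹
            else 0))
        = if m = n then γ m * (starRingEnd ℂ) (γ n) *
            (-((∏ j ∈ Finset.univ.erase m, (Q m - Q j)) * ∏ j, (Q m - P j)⁻¹)) else 0 := by
      intro n _
      split <;> simp
    rw [Finset.sum_congr rfl step3, Finset.sum_ite_eq]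
    simp
  -- real coefficients
  have hAc : ∀ i, (∏ j, (P i - Q j)) * ∏ j ∈ Finset.univ.erase i, (P i - P j)⁻¹
      = (((∏ j, (p i - q j)) * ∏ j ∈ Finset.univ.erase i, (p i - p j)⁻¹ : ℝ) : ℂ) := by
    intro i
    rw [Complex.ofReal_mul, Complex.ofReal_prod, Complex.ofReal_prod]
    simp [hPdef, hQdef]
  have hBc : ∀ m, (∏ j ∈ Finset.univ.erase m, (Q m - Q j)) * ∏ j, (Q m - P j)⁻¹
      = (((∏ j ∈ Finset.univ.erase m, (q m - q j)) * ∏ j, (q m - p j)⁻¹ : ℝ) : ℂ) := by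
    intro m
    rw [Complex.ofReal_mul, Complex.ofReal_prod, Complex.ofReal_prod]
    simp [hPdef, hQdef]
  -- combine into a single real equation
  have hC : ∑ i, (((∏ j, (p i - q j)) * (∏ j ∈ Finset.univ.erase i, (p i - p j)⁻¹)
        * Complex.normSq (r i)
      + (∏ j ∈ Finset.univ.erase i, (q i - q j)) * ∏ j, (q i - p j)⁻¹)
        * Complex.normSq (γ i) : ℝ) = 0 := by
    have hterm : ∀ i ∈ Finset.univ, ((((∏ j, (p i - q j)) *
          (∏ j ∈ Finset.univ.erase i, (p i - p j)⁻¹) * Complex.normSq (r i)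
        + (∏ j ∈ Finset.univ.erase i, (q i - q j)) * ∏ j, (q i - p j)⁻¹)
          * Complex.normSq (γ i) : ℝ) : ℂ)
        = ((∏ j, (P i - Q j)) * ∏ j ∈ Finset.univ.erase i, (P i - P j)⁻¹) *
            (f i * (starRingEnd ℂ) (f i))
          + ((∏ j ∈ Finset.univ.erase i, (Q i - Q j)) * ∏ j, (Q i - P j)⁻¹) *
            (γ i * (starRingEnd ℂ) (γ i)) := by
      intro i _
      rw [hfr i, map_neg, neg_mul_neg, Complex.mul_conj, Complex.mul_conj, hAc i, hBc i]
      push_cast [Complex.normSq_mul]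
      ring
    rw [← Complex.ofReal_eq_zero, Complex.ofReal_sum, Finset.sum_congr rfl hterm,
      Finset.sum_add_distrib, hmain, ← Finset.sum_add_distrib]
    exact Finset.sum_eq_zero fun m _ => by ring
  -- coefficient positivity
  have hCpos : ∀ i : Fin M, 0 < ∏ j ∈ Finset.univ.erase i, ((q i - q j) * (q i - p j)⁻¹) := by
    intro i
    refine Finset.prod_pos fun j hj => ?_
    rcases ((Finset.mem_erase.mp hj).1).lt_or_gt with h | h
    · exact mul_pos (sub_pos.mpr (hq_lt j i h)) (inv_pos.mpr (sub_pos.mpr (hpq j i h)))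
    · exact mul_pos_of_neg_of_neg (sub_neg.mpr (hq_lt i j h))
        (inv_lt_zero.mpr (sub_neg.mpr (hqltp i j h)))
  have hw : ∀ i : Fin M, (∏ j, (p i - q j)) * (∏ j ∈ Finset.univ.erase i, (p i - p j)⁻¹)
        * Complex.normSq (r i)
      + (∏ j ∈ Finset.univ.erase i, (q i - q j)) * ∏ j, (q i - p j)⁻¹
      = (d i ^ 2 - 1) * ((p i - q i)⁻¹ *
          ∏ j ∈ Finset.univ.erase i, ((q i - q j) * (q i - p j)⁻¹)) := by
    intro i
    have hr' : Complex.normSq (r i) = (d i ^ 2 / (p i - q i) ^ 2) *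
        ∏ j ∈ Finset.univ.erase i, ((q j - q i) * (p j - p i)) / ((p j - q i) * (q j - p i)) := by
      rw [← Complex.sq_norm, hr i]
    have e1 : (∏ j, (p i - q j)) = (p i - q i) * ∏ j ∈ Finset.univ.erase i, (p i - q j) :=
      (Finset.mul_prod_erase _ _ (Finset.mem_univ i)).symm
    have e2 : (∏ j, (q i - p j)⁻¹) = (q i - p i)⁻¹ * ∏ j ∈ Finset.univ.erase i, (q i - p j)⁻¹ :=
      (Finset.mul_prod_erase _ _ (Finset.mem_univ i)).symm
    have e4 : ∀ j ∈ Finset.univ.erase i, (p i - q j) * (p i - p j)⁻¹ *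
        (((q j - q i) * (p j - p i)) / ((p j - q i) * (q j - p i)))
        = (q i - q j) * (q i - p j)⁻¹ := by
      intro j hj
      have hne := (Finset.mem_erase.mp hj).1
      have n1 := hpp0 i j hne
      have n2 := hpq0 j i
      have n3 := hqp0 j i
      have n4 := hqp0 i j
      field_simp
      ring
    have e5 : ∏ j ∈ Finset.univ.erase i, (q i - q j) * (q i - p j)⁻¹
        = (∏ j ∈ Finset.univ.erase i, (p i - q j)) *
          (∏ j ∈ Finset.univ.erase i, (p i - p j)⁻¹) *
          ∏ j ∈ Finset.univ.erase i, ((q j - q i) * (p j - p i)) / ((p j - q i) * (q j - p i)) := by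
      rw [← Finset.prod_mul_distrib, ← Finset.prod_mul_distrib]
      exact (Finset.prod_congr rfl e4).symm
    rw [hr', e1, e2]
    rw [show (∏ j ∈ Finset.univ.erase i, (q i - q j)) *
        ((q i - p i)⁻¹ * ∏ j ∈ Finset.univ.erase i, (q i - p j)⁻¹)
        = (q i - p i)⁻¹ * ∏ j ∈ Finset.univ.erase i, ((q i - q j) * (q i - p j)⁻¹) from by
      rw [Finset.prod_mul_distrib]; ring]
    rw [e5]
    rw [show q i - p i = -(p i - q i) from by ring, inv_neg]
    have hpqii := hpq0 i i
    have hs : (p i - q i) * (d i ^ 2 / (p i - q i) ^ 2) = d i ^ 2 * (p i - q i)⁻¹ := by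
      field_simp
    linear_combination ((∏ j ∈ Finset.univ.erase i, (p i - q j)) *
      (∏ j ∈ Finset.univ.erase i, (p i - p j)⁻¹) *
      ∏ j ∈ Finset.univ.erase i, ((q j - q i) * (p j - p i)) / ((p j - q i) * (q j - p i))) * hs
  have hwpos : ∀ i : Fin M, 0 < (d i ^ 2 - 1) * ((p i - q i)⁻¹ *
      ∏ j ∈ Finset.univ.erase i, ((q i - q j) * (q i - p j)⁻¹)) := by
    intro i
    have h1 : (0:ℝ) < d i ^ 2 - 1 := by nlinarith [hd i]
    exact mul_pos h1 (mul_pos (inv_pos.mpr (sub_pos.mpr (hqp i))) (hCpos i))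
  rw [Finset.sum_congr rfl fun i _ => by rw [hw i]] at hC
  obtain ⟨i0, hi0⟩ : ∃ i, γ i ≠ 0 := Function.ne_iff.mp hγ0
  have hterm0 := (Finset.sum_eq_zero_iff_of_nonneg fun i _ =>
    mul_nonneg (hwpos i).le (Complex.normSq_nonneg _)).mp hC i0 (Finset.mem_univ i0)
  exact absurd hterm0 (ne_of_gt (mul_pos (hwpos i0) (Complex.normSq_pos.mpr hi0)))
end

section
/- Let β ∈ (−1, 1), a = (1 − β²)/(1 + β²), and define f(z) = a·(1 + 2β/(e^{−iaz} − β)) for z in the closed upper half-plane. Then f is holomorphic where e^{−iaz} ≠ β, satisfies the complex ODE f'(z) = (i/2)(f(z)² − a²), and f(0) = (1+β)²/(1+β²). -/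
open Complex

theorem stmt_12 (β : ℝ) (hβ1 : -1 < β) (hβ2 : β < 1)
    (a : ℝ) (ha : a = (1 - β ^ 2) / (1 + β ^ 2))
    (f : ℂ → ℂ)
    (hf : ∀ z : ℂ, f z = (a : ℂ) *
      (1 + 2 * (β : ℂ) / (Complex.exp (-(Complex.I * a * z)) - (β : ℂ)))) :
    (∀ z : ℂ, 0 ≤ z.im → Complex.exp (-(Complex.I * a * z)) ≠ (β : ℂ) →
        DifferentiableAt ℂ f z) ∧
    (∀ z : ℂ, 0 ≤ z.im → Complex.exp (-(Complex.I * a * z)) ≠ (β : ℂ) →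
        deriv f z = (Complex.I / 2) * (f z ^ 2 - (a : ℂ) ^ 2)) ∧
    f 0 = (((1 + β) ^ 2 / (1 + β ^ 2) : ℝ) : ℂ) := by
  have key : ∀ z : ℂ, Complex.exp (-(Complex.I * a * z)) ≠ (β : ℂ) →
      HasDerivAt f (2 * Complex.I * (a : ℂ) ^ 2 * β * Complex.exp (-(Complex.I * a * z)) /
        (Complex.exp (-(Complex.I * a * z)) - (β : ℂ)) ^ 2) z := by
    intro z hne
    have hne' : Complex.exp (-(Complex.I * a * z)) - (β : ℂ) ≠ 0 := sub_ne_zero.mpr hne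
    have h0 : HasDerivAt (fun z : ℂ => -(Complex.I * a * z)) (-(Complex.I * a)) z := by
      simpa using ((hasDerivAt_id z).const_mul (-(Complex.I * (a : ℂ))))
    have h1 : HasDerivAt (fun z : ℂ => Complex.exp (-(Complex.I * a * z)))
        (Complex.exp (-(Complex.I * a * z)) * (-(Complex.I * a))) z := h0.cexp
    have h2 : HasDerivAt (fun z : ℂ => Complex.exp (-(Complex.I * a * z)) - (β : ℂ))
        (Complex.exp (-(Complex.I * a * z)) * (-(Complex.I * a))) z := h1.sub_const _
    have h3 := ((hasDerivAt_const z ((2 : ℂ) * β)).fun_div h2 hne').const_add 1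
    have h4 := h3.const_mul (a : ℂ)
    have heq : (fun z : ℂ => (a : ℂ) * (1 + 2 * (β : ℂ) /
        (Complex.exp (-(Complex.I * a * z)) - (β : ℂ)))) = f := by
      funext w; rw [hf w]
    rw [heq] at h4
    refine h4.congr_deriv ?_
    field_simp
    ring
  refine ⟨fun z _ hne => (key z hne).differentiableAt, fun z _ hne => ?_, ?_⟩
  · rw [(key z hne).deriv, hf z]
    have hne' : Complex.exp (-(Complex.I * a * z)) - (β : ℂ) ≠ 0 := sub_ne_zero.mpr hne
    field_simp
    ring
  · rw [hf 0]
    have h1 : (1 : ℂ) - (β : ℂ) ≠ 0 := by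
      intro h
      have : (β : ℂ) = 1 := by linear_combination -h
      exact absurd (by exact_mod_cast this) (ne_of_lt hβ2)
    have h2 : (1 : ℝ) + β ^ 2 ≠ 0 := by positivity
    have h2' : (1 : ℂ) + (β : ℂ) ^ 2 ≠ 0 := by exact_mod_cast h2
    simp only [mul_zero, neg_zero, Complex.exp_zero, ha]
    push_cast
    field_simp
    ring
end
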